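/- For every ±1 assignment on H = {(i,j) : i·j ≤ n, 1 ≤ i,j ≤ n}, there exist row switches x ∈ {±1}^n and column switches y ∈ {±1}^n such that ∑_{(i,j)∈H} a_{ij} x_i y_j ≥ n. -/
import Mathlib


/-- The hyperbolic board: lattice points `(i,j)` of the `n × n` grid
(1-indexed) with `i·j ≤ n`. -/
def hypBoard (n : ℕ) : Finset (Fin n × Fin n) :=
  Finset.univ.filter (fun p => ((p.1 : ℕ) + 1) * ((p.2 : ℕ) + 1) ≤ n)

/-- For every `±1` assignment on the hyperbolic board there are switch
settings achieving discrepancy at least `n`. -/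
theorem stmt_18 (n : ℕ) (a : Fin n × Fin n → ℤ)
    (ha : ∀ p ∈ hypBoard n, a p = 1 ∨ a p = -1) :
    ∃ x y : Fin n → ℤ,
      (∀ i, x i = 1 ∨ x i = -1) ∧ (∀ j, y j = 1 ∨ y j = -1) ∧
      (n : ℤ) ≤ ∑ p ∈ hypBoard n, a p * x p.1 * y p.2 := by
  rcases Nat.eq_zero_or_pos n with h0 | hn
  · subst h0
    exact ⟨fun _ => 1, fun _ => 1, fun i => Or.inl rfl, fun j => Or.inl rfl, by
      rw [show hypBoard 0 = ∅ by rfl]; simp⟩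
  set i0 : Fin n := ⟨0, hn⟩ with hi0
  set y : Fin n → ℤ := fun j => a (i0, j) with hy
  have hmem0 : ∀ j : Fin n, (i0, j) ∈ hypBoard n := by
    intro j
    simp only [hypBoard, Finset.mem_filter, Finset.mem_univ, true_and]
    have := j.isLt
    show (0 + 1) * ((j : ℕ) + 1) ≤ n
    omega
  have hy1 : ∀ j, y j = 1 ∨ y j = -1 := fun j => ha _ (hmem0 j)
  set S : Fin n → ℤ :=
    fun i => ∑ j : Fin n, if ((i : ℕ) + 1) * ((j : ℕ) + 1) ≤ n then a (i, j) * y j else 0 with hS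
  set x : Fin n → ℤ := fun i => if 0 ≤ S i then 1 else -1 with hx
  have hx1 : ∀ i, x i = 1 ∨ x i = -1 := by
    intro i; simp only [hx]; split <;> simp
  refine ⟨x, y, hx1, hy1, ?_⟩
  have hsum : ∑ p ∈ hypBoard n, a p * x p.1 * y p.2 = ∑ i, x i * S i := by
    rw [hypBoard, Finset.sum_filter, Fintype.sum_prod_type]
    refine Finset.sum_congr rfl fun i _ => ?_
    rw [hS, Finset.mul_sum]
    refine Finset.sum_congr rfl fun j _ => ?_
    split <;> ring
  rw [hsum]
  have hterm : ∀ i, 0 ≤ x i * S i := by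
    intro i
    simp only [hx]
    split
    · simpa
    · rename_i h; nlinarith
  have hS0 : S i0 = n := by
    have : ∀ j : Fin n, (if ((i0 : ℕ) + 1) * ((j : ℕ) + 1) ≤ n then a (i0, j) * y j else 0)
        = 1 := by
      intro j
      have hle : ((i0 : ℕ) + 1) * ((j : ℕ) + 1) ≤ n := by
        show (0 + 1) * ((j : ℕ) + 1) ≤ n
        have := j.isLt; omega
      rw [if_pos hle, hy]
      rcases ha _ (hmem0 j) with h | h <;> simp [h]
    calc S i0 = ∑ _j : Fin n, (1 : ℤ) := Finset.sum_congr rfl fun j _ => this j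
      _ = n := by simp
  have hx0 : x i0 = 1 := by
    simp only [hx]
    rw [if_pos]; rw [hS0]; positivity
  calc (n : ℤ) = x i0 * S i0 := by rw [hx0, hS0]; ring
    _ ≤ ∑ i, x i * S i :=
      Finset.single_le_sum (fun i _ => hterm i) (Finset.mem_univ i0)
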